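/- Let q ≥ 2, let G be a finite connected (q+1)-regular graph, and let k ≥ 1. Then for every K ∈ H_k one has | ‖K̂_G‖²_HSN − ‖K‖²_{H_k} | ≤ τ̃(k)² ‖K‖²_sup · (1/|V|) #{x ∈ V : ρ(x) ≤ k}. -/

import Mathlib

open Classical Finset

noncomputable section

def IsNB {V : Type} (G : SimpleGraph V) {k : ℕ} (ω : Fin (k + 1) → V) : Prop :=
  (∀ i j : Fin (k + 1), (j : ℕ) = (i : ℕ) + 1 → G.Adj (ω i) (ω j)) ∧
  (∀ i j : Fin (k + 1), (j : ℕ) = (i : ℕ) + 2 → ω i ≠ ω j)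

def nbFinset {V : Type} [Fintype V] (G : SimpleGraph V) (k : ℕ) :
    Finset (Fin (k + 1) → V) :=
  Finset.univ.filter fun ω => IsNB G ω

def RegularOfDegree {V : Type} [Fintype V] (G : SimpleGraph V) (d : ℕ) : Prop :=
  ∀ x : V, (Finset.univ.filter fun y => G.Adj x y).card = d

def ballHasCycle {V : Type} (G : SimpleGraph V) (x : V) (r : ℕ) : Prop :=
  ∃ (y : V) (w : G.Walk y y), w.IsCycle ∧ ∀ v ∈ w.support, G.dist x v ≤ r

def hNormSq {V : Type} [Fintype V] (G : SimpleGraph V) (k : ℕ)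
    (K : (Fin (k + 1) → V) → ℂ) : ℝ :=
  (1 / (Fintype.card V : ℝ)) * ∑ ω ∈ nbFinset G k, ‖K ω‖ ^ 2

/-- The sup-norm `‖K‖_sup = max_{ω ∈ B_k} |K(ω)|`. -/
def supNorm {V : Type} [Fintype V] (G : SimpleGraph V) (k : ℕ)
    (K : (Fin (k + 1) → V) → ℂ) : ℝ :=
  (((nbFinset G k).sup fun ω => ‖K ω‖₊ : NNReal) : ℝ)

def kernelG {V : Type} [Fintype V] (G : SimpleGraph V) (k : ℕ)
    (K : (Fin (k + 1) → V) → ℂ) (x y : V) : ℂ :=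
  ∑ ω ∈ (nbFinset G k).filter fun ω => ω 0 = x ∧ ω (Fin.last k) = y, K ω

def hsnNormSq {V : Type} [Fintype V] (G : SimpleGraph V) (k : ℕ)
    (K : (Fin (k + 1) → V) → ℂ) : ℝ :=
  (1 / (Fintype.card V : ℝ)) * ∑ x : V, ∑ y : V, ‖kernelG G k K x y‖ ^ 2

/-- `τ̃(k) = 1 + (q+1) ∑_{1 ≤ j ≤ k} q^{j-1}`, the cardinality of a ball of radius `k` in the
`(q+1)`-regular tree. -/
def ttau (q k : ℕ) : ℕ :=
  1 + (q + 1) * ∑ j ∈ Finset.range k, q ^ j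

section Aux
variable {V : Type} {G : SimpleGraph V}

theorem walkOfFn_adj0 {n : ℕ} (ω : Fin (n + 2) → V)
    (h : ∀ i : Fin (n + 1), G.Adj (ω i.castSucc) (ω i.succ)) : G.Adj (ω 0) (ω 1) := by
  simpa using h 0

def walkOfFn (G : SimpleGraph V) : ∀ {n : ℕ} (ω : Fin (n + 1) → V),
    (∀ i : Fin n, G.Adj (ω i.castSucc) (ω i.succ)) → G.Walk (ω 0) (ω (Fin.last n))
  | 0, ω, _ => SimpleGraph.Walk.nil.copy rfl (by norm_num [Fin.last])
  | n + 1, ω, h =>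
      (SimpleGraph.Walk.cons (walkOfFn_adj0 ω h)
        (SimpleGraph.Walk.copy (u := ω (Fin.succ 0)) (v := ω (Fin.last n).succ)
          (walkOfFn G (fun i => ω i.succ) (fun i => by
            have := h i.succ
            convert this using 2
            exact (Fin.succ_castSucc i)))
          (by simp) (by simp [Fin.succ_last]))).copy rfl rfl

theorem walkOfFn_support : ∀ {n : ℕ} (ω : Fin (n + 1) → V)
    (h : ∀ i : Fin n, G.Adj (ω i.castSucc) (ω i.succ)),
    (walkOfFn G ω h).support = List.ofFn ω
  | 0, ω, _ => by simp [walkOfFn, List.ofFn_succ]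
  | n + 1, ω, h => by
      rw [walkOfFn]
      simp only [SimpleGraph.Walk.support_copy, SimpleGraph.Walk.support_cons]
      erw [SimpleGraph.Walk.support_copy, walkOfFn_support (fun i => ω i.succ)]
      simp [List.ofFn_succ]

theorem walkOfFn_length : ∀ {n : ℕ} (ω : Fin (n + 1) → V)
    (h : ∀ i : Fin n, G.Adj (ω i.castSucc) (ω i.succ)),
    (walkOfFn G ω h).length = n
  | 0, ω, _ => by simp [walkOfFn]
  | n + 1, ω, h => by
      rw [walkOfFn]
      simp only [SimpleGraph.Walk.length_copy, SimpleGraph.Walk.length_cons]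
      erw [SimpleGraph.Walk.length_copy, walkOfFn_length (fun i => ω i.succ)]

theorem walkOfFn_edges : ∀ {n : ℕ} (ω : Fin (n + 1) → V)
    (h : ∀ i : Fin n, G.Adj (ω i.castSucc) (ω i.succ)),
    (walkOfFn G ω h).edges = List.ofFn (fun i : Fin n => s(ω i.castSucc, ω i.succ))
  | 0, ω, _ => by simp [walkOfFn]
  | n + 1, ω, h => by
      rw [walkOfFn]
      simp only [SimpleGraph.Walk.edges_copy, SimpleGraph.Walk.edges_cons]
      erw [SimpleGraph.Walk.edges_copy, walkOfFn_edges (fun i => ω i.succ)]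
      simp [List.ofFn_succ]

theorem IsNB.adjChain {n : ℕ} {ω : Fin (n + 1) → V} (h : IsNB G ω) :
    ∀ i : Fin n, G.Adj (ω i.castSucc) (ω i.succ) := fun i =>
  h.1 i.castSucc i.succ (by simp)

theorem IsNB.front {n : ℕ} {ω : Fin (n + 2) → V} (h : IsNB G ω) :
    IsNB G (fun i : Fin (n + 1) => ω i.castSucc) :=
  ⟨fun i j hij => h.1 i.castSucc j.castSucc (by simpa using hij),
   fun i j hij => h.2 i.castSucc j.castSucc (by simpa using hij)⟩

theorem IsNB.tail {n : ℕ} {ω : Fin (n + 2) → V} (h : IsNB G ω) :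
    IsNB G (fun i : Fin (n + 1) => ω i.succ) :=
  ⟨fun i j hij => h.1 i.succ j.succ (by simpa using hij),
   fun i j hij => h.2 i.succ j.succ (by simpa using hij)⟩


theorem nb_injective (hac : G.IsAcyclic) :
    ∀ {n : ℕ} (ω : Fin (n + 1) → V), IsNB G ω → Function.Injective ω := by
  intro n
  induction n with
  | zero => intro ω _ a b _; exact Fin.ext (by omega)
  | succ n IH =>
    intro ω hω
    have hfront : Function.Injective (fun i : Fin (n + 1) => ω i.castSucc) := IH _ hω.front
    have htail : Function.Injective (fun i : Fin (n + 1) => ω i.succ) := IH _ hω.tail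
    have injLow : ∀ a b : Fin (n + 2), (a : ℕ) ≤ n → (b : ℕ) ≤ n → ω a = ω b → a = b := by
      intro a b ha hb hab
      have e1 : ((⟨(a : ℕ), by omega⟩ : Fin (n + 1)).castSucc) = a := Fin.ext (by simp)
      have e2 : ((⟨(b : ℕ), by omega⟩ : Fin (n + 1)).castSucc) = b := Fin.ext (by simp)
      have h1 : ω ((⟨(a : ℕ), by omega⟩ : Fin (n + 1)).castSucc)
          = ω ((⟨(b : ℕ), by omega⟩ : Fin (n + 1)).castSucc) := by
        rw [e1, e2]; exact hab
      have := hfront h1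
      rw [Fin.mk.injEq] at this
      exact Fin.ext this
    have injHigh : ∀ a b : Fin (n + 2), 1 ≤ (a : ℕ) → 1 ≤ (b : ℕ) → ω a = ω b → a = b := by
      intro a b ha hb hab
      have e1 : ((⟨(a : ℕ) - 1, by omega⟩ : Fin (n + 1)).succ) = a :=
        Fin.ext (by simp only [Fin.val_succ]; omega)
      have e2 : ((⟨(b : ℕ) - 1, by omega⟩ : Fin (n + 1)).succ) = b :=
        Fin.ext (by simp only [Fin.val_succ]; omega)
      have h1 : ω ((⟨(a : ℕ) - 1, by omega⟩ : Fin (n + 1)).succ)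
          = ω ((⟨(b : ℕ) - 1, by omega⟩ : Fin (n + 1)).succ) := by
        rw [e1, e2]; exact hab
      have := htail h1
      rw [Fin.mk.injEq] at this
      exact Fin.ext (by omega)
    have key : ∀ a b : Fin (n + 2), a < b → ω a = ω b → False := by
      intro a b hab heq
      by_cases hbn : (b : ℕ) ≤ n
      · exact absurd (injLow a b (by omega) hbn heq) hab.ne
      by_cases han : 1 ≤ (a : ℕ)
      · exact absurd (injHigh a b han (by omega) heq) hab.ne
      -- a = 0, b = last
      have ha0 : a = 0 := Fin.ext (by simp only [Fin.val_zero]; omega)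
      have hb2 : (b : ℕ) < n + 2 := b.isLt
      have hbl : b = Fin.last (n + 1) := Fin.ext (by simp only [Fin.val_last]; omega)
      subst ha0; subst hbl
      -- build a cycle
      have injf : Function.Injective
          (fun i : Fin (n + 1) => s(ω i.castSucc, ω i.succ)) := by
        intro i j hij
        simp only [Sym2.eq_iff] at hij
        rcases hij with ⟨h1, _⟩ | ⟨h1, h2⟩
        · exact Fin.castSucc_inj.mp (injLow _ _
            (by simpa using Nat.lt_succ_iff.mp i.isLt)
            (by simpa using Nat.lt_succ_iff.mp j.isLt) h1)
        · by_cases hijeq : i = j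
          · subst hijeq
            exact ((hω.adjChain i).ne h1).elim
          by_cases hj1 : 1 ≤ (j : ℕ)
          · have hij2 : i.succ = j.castSucc :=
              injHigh _ _ (by simp) (by simpa using hj1) h2
            have hval : (j : ℕ) = (i : ℕ) + 1 := by
              have := congrArg Fin.val hij2
              simpa using this.symm
            exact (hω.2 i.castSucc j.succ (by simp [hval]) h1).elim
          · have hj0 : j = 0 := Fin.ext (by simp only [Fin.val_zero]; omega)
            subst hj0
            have hi0 : (i : ℕ) ≠ 0 := by
              intro h0
              exact hijeq (Fin.ext (by simp [h0]))
            have hi1 : i.castSucc = ((0 : Fin (n + 1)).succ : Fin (n + 2)) :=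
              injHigh _ _ (by simp only [Fin.coe_castSucc]; omega)
                (by simp) h1
            have hival : (i : ℕ) = 1 := by
              have := congrArg Fin.val hi1
              simpa using this
            exact (hω.2 ((0 : Fin (n+1)).castSucc) i.succ
              (by simp [Fin.val_succ, hival]) (by simpa using h2.symm)).elim
      have hcyc : ((walkOfFn G ω hω.adjChain).copy rfl heq.symm).IsCycle := by
        refine ⟨⟨⟨?_⟩, ?_⟩, ?_⟩
        · rw [SimpleGraph.Walk.edges_copy, walkOfFn_edges]
          exact List.nodup_ofFn.mpr injf
        · intro hnil
          have hlen : ((walkOfFn G ω hω.adjChain).copy rfl heq.symm).length = n + 1 := by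
            rw [SimpleGraph.Walk.length_copy, walkOfFn_length]
          rw [hnil] at hlen
          simp at hlen
        · rw [SimpleGraph.Walk.support_copy, walkOfFn_support, List.ofFn_succ,
            List.tail_cons]
          exact List.nodup_ofFn.mpr htail
      exact hac _ hcyc
    intro a b hab
    by_contra hne
    rcases Ne.lt_or_gt hne with h | h
    · exact absurd (key a b h hab) not_false
    · exact absurd (key b a h hab.symm) not_false

theorem nb_unique (hac : G.IsAcyclic) {n : ℕ} {ω ω' : Fin (n + 1) → V}
    (hω : IsNB G ω) (hω' : IsNB G ω') (h0 : ω 0 = ω' 0)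
    (hl : ω (Fin.last n) = ω' (Fin.last n)) : ω = ω' := by
  have hp : (walkOfFn G ω hω.adjChain).IsPath := by
    rw [SimpleGraph.Walk.isPath_def, walkOfFn_support]
    exact List.nodup_ofFn.mpr (nb_injective hac ω hω)
  have hp' : ((walkOfFn G ω' hω'.adjChain).copy h0.symm hl.symm).IsPath := by
    rw [SimpleGraph.Walk.isPath_copy, SimpleGraph.Walk.isPath_def, walkOfFn_support]
    exact List.nodup_ofFn.mpr (nb_injective hac ω' hω')
  have hpq := (SimpleGraph.isAcyclic_iff_path_unique.mp hac)
    (⟨_, hp⟩ : G.Path (ω 0) (ω (Fin.last n))) ⟨_, hp'⟩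
  have hsup := congrArg (fun p : G.Path (ω 0) (ω (Fin.last n)) =>
    (p : G.Walk (ω 0) (ω (Fin.last n))).support) hpq
  simp only [SimpleGraph.Walk.support_copy, walkOfFn_support] at hsup
  exact List.ofFn_injective hsup

theorem bad_of_two (hconn : G.Connected) {k : ℕ} {ω ω' : Fin (k + 1) → V}
    (hω : IsNB G ω) (hω' : IsNB G ω') (h0 : ω 0 = ω' 0)
    (hl : ω (Fin.last k) = ω' (Fin.last k)) (hne : ω ≠ ω') :
    ballHasCycle G (ω 0) (k + 1) := by
  by_contra hball
  set x := ω 0 with hx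
  set S : Set V := {v | G.dist x v ≤ k + 1} with hS
  have hacy : (G.induce S).IsAcyclic := by
    intro v c hc
    apply hball
    refine ⟨(v : V), c.map (SimpleGraph.Embedding.induce S).toHom,
      hc.map Subtype.val_injective, ?_⟩
    intro u hu
    erw [SimpleGraph.Walk.support_map, List.mem_map] at hu
    obtain ⟨u', _, rfl⟩ := hu
    exact u'.2
  have hdist : ∀ (ρ : Fin (k + 1) → V), IsNB G ρ → ρ 0 = x →
      ∀ i : Fin (k + 1), G.dist x (ρ i) ≤ (i : ℕ) := by
    intro ρ hρ hρ0 i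
    induction i using Fin.induction with
    | zero => simp [hρ0, SimpleGraph.dist_self]
    | succ i IH =>
      have h1 : G.dist x (ρ i.succ) ≤ G.dist x (ρ i.castSucc)
          + G.dist (ρ i.castSucc) (ρ i.succ) := hconn.dist_triangle
      have h2 : G.dist (ρ i.castSucc) (ρ i.succ) ≤ 1 := by
        have := SimpleGraph.dist_le (SimpleGraph.Walk.cons (hρ.adjChain i)
          SimpleGraph.Walk.nil)
        simpa using this
      have h3 := IH
      simp only [Fin.val_succ, Fin.coe_castSucc] at *
      omega
  have hmem : ∀ (ρ : Fin (k + 1) → V), IsNB G ρ → ρ 0 = x → ∀ i, ρ i ∈ S := by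
    intro ρ hρ hρ0 i
    have := hdist ρ hρ hρ0 i
    have hik : (i : ℕ) ≤ k := Nat.lt_succ_iff.mp i.isLt
    simp only [hS, Set.mem_setOf_eq]
    omega
  set ωH : Fin (k + 1) → S := fun i => ⟨ω i, hmem ω hω rfl i⟩ with hωH
  set ωH' : Fin (k + 1) → S := fun i => ⟨ω' i, hmem ω' hω' h0.symm i⟩ with hωH'
  have hNH : IsNB (G.induce S) ωH := by
    refine ⟨fun i j hij => ?_, fun i j hij h => ?_⟩
    · simpa using hω.1 i j hij
    · exact hω.2 i j hij (congrArg Subtype.val h)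
  have hNH' : IsNB (G.induce S) ωH' := by
    refine ⟨fun i j hij => ?_, fun i j hij h => ?_⟩
    · simpa using hω'.1 i j hij
    · exact hω'.2 i j hij (congrArg Subtype.val h)
  have := nb_unique hacy hNH hNH' (Subtype.ext h0) (Subtype.ext hl)
  apply hne
  funext i
  exact congrArg Subtype.val (congrFun this i)

variable [Fintype V]


theorem card_start_le_step {G : SimpleGraph V} {q : ℕ} (hreg : RegularOfDegree G (q + 1))
    (j : ℕ) (hj : 1 ≤ j) (x : V) :
    ((nbFinset G (j + 1)).filter fun ω => ω 0 = x).card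
      ≤ q * ((nbFinset G j).filter fun ω => ω 0 = x).card := by
  set s := (nbFinset G (j + 1)).filter fun ω => ω 0 = x with hs
  set t := (nbFinset G j).filter fun ω => ω 0 = x with ht
  set π : (Fin (j + 2) → V) → (Fin (j + 1) → V) :=
    fun ω => fun i => ω i.castSucc with hπ
  have hmem : ∀ ω, ω ∈ s ↔ IsNB G ω ∧ ω 0 = x := by
    intro ω; simp [hs, nbFinset]
  have hmemt : ∀ ρ, ρ ∈ t ↔ IsNB G ρ ∧ ρ 0 = x := by
    intro ρ; simp [ht, nbFinset]
  have Hf : ∀ ω ∈ s, π ω ∈ t := by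
    intro ω hω
    rw [hmem] at hω
    rw [hmemt]
    exact ⟨hω.1.front, by simpa [hπ] using hω.2⟩
  refine Finset.card_le_mul_card_image_of_maps_to Hf q ?_
  intro ρ hρ
  rw [hmemt] at hρ
  set prev : V := ρ ⟨j - 1, by omega⟩ with hprev
  set N : Finset V :=
    (Finset.univ.filter fun y => G.Adj (ρ (Fin.last j)) y).erase prev with hN
  have hprevmem : prev ∈ Finset.univ.filter fun y => G.Adj (ρ (Fin.last j)) y := by
    rw [Finset.mem_filter]
    refine ⟨Finset.mem_univ _, ?_⟩
    have := hρ.1.1 ⟨j - 1, by omega⟩ (Fin.last j) (by simp [Fin.val_last]; omega)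
    exact this.symm
  have hcardN : N.card = q := by
    rw [hN, Finset.card_erase_of_mem hprevmem, hreg]
    simp
  calc (s.filter fun ω => π ω = ρ).card ≤ N.card := by
        apply Finset.card_le_card_of_injOn (fun ω => ω (Fin.last (j + 1)))
        · intro ω hω
          rw [Finset.mem_coe, Finset.mem_filter] at hω
          obtain ⟨hωs, hfib⟩ := hω
          rw [hmem] at hωs
          have hπi : ∀ i : Fin (j + 1), ω i.castSucc = ρ i := fun i => congrFun hfib i
          rw [hN, Finset.mem_coe, Finset.mem_erase]
          constructor
          · have h2 := hωs.1.2 (⟨j - 1, by omega⟩ : Fin (j + 2)) (Fin.last (j + 1))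
              (by simp [Fin.val_last]; omega)
            have he : ω (⟨j - 1, by omega⟩ : Fin (j + 2))
                = ρ (⟨j - 1, by omega⟩ : Fin (j + 1)) := by
              have := hπi ⟨j - 1, by omega⟩
              rw [← this]
              congr 1
            intro hcontra
            rw [hprev] at hcontra
            exact h2 (by rw [he]; exact hcontra.symm)
          · rw [Finset.mem_filter]
            refine ⟨Finset.mem_univ _, ?_⟩
            have := hωs.1.1 (Fin.last j).castSucc (Fin.last (j + 1))
              (by simp [Fin.val_last])
            rwa [hπi (Fin.last j)] at this
        · intro ω hω ω₂ hω₂ hlast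
          rw [Finset.coe_filter, Set.mem_setOf_eq] at hω hω₂
          funext i
          refine Fin.lastCases ?_ ?_ i
          · exact hlast
          · intro i
            rw [show ω i.castSucc = ρ i from congrFun hω.2 i,
              show ω₂ i.castSucc = ρ i from congrFun hω₂.2 i]
      _ = q := hcardN

theorem card_start_le_one {G : SimpleGraph V} {q : ℕ} (hreg : RegularOfDegree G (q + 1))
    (x : V) : ((nbFinset G 1).filter fun ω => ω 0 = x).card ≤ q + 1 := by
  rw [← hreg x]
  apply Finset.card_le_card_of_injOn (fun ω => ω 1)
  · intro ω hω
    simp only [Finset.mem_coe, nbFinset, Finset.mem_filter, Finset.mem_univ, true_and] at hω ⊢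
    have := hω.1.1 0 1 (by norm_num)
    rwa [hω.2] at this
  · intro ω hω ω₂ hω₂ h
    rw [Finset.coe_filter, Set.mem_setOf_eq] at hω hω₂
    simp only [nbFinset, Finset.mem_filter] at hω hω₂
    funext i
    fin_cases i
    · exact hω.2.trans hω₂.2.symm
    · exact h

theorem card_start_le {G : SimpleGraph V} {q : ℕ} (hreg : RegularOfDegree G (q + 1))
    (k : ℕ) (hk : 1 ≤ k) (x : V) :
    ((nbFinset G k).filter fun ω => ω 0 = x).card ≤ (q + 1) * q ^ (k - 1) := by
  have aux : ∀ m : ℕ,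
      ((nbFinset G (m + 1)).filter fun ω => ω 0 = x).card ≤ (q + 1) * q ^ m := by
    intro m
    induction m with
    | zero => simpa using card_start_le_one hreg x
    | succ m IH =>
      calc ((nbFinset G (m + 1 + 1)).filter fun ω => ω 0 = x).card
          ≤ q * ((nbFinset G (m + 1)).filter fun ω => ω 0 = x).card :=
            card_start_le_step hreg (m + 1) (Nat.le_add_left 1 m) x
        _ ≤ q * ((q + 1) * q ^ m) := by gcongr
        _ = (q + 1) * q ^ (m + 1) := by ring
  obtain ⟨m, rfl⟩ : ∃ m, k = m + 1 := ⟨k - 1, by omega⟩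
  simpa using aux m

theorem card_start_le_ttau {G : SimpleGraph V} {q : ℕ} (hreg : RegularOfDegree G (q + 1))
    (k : ℕ) (hk : 1 ≤ k) (x : V) :
    ((nbFinset G k).filter fun ω => ω 0 = x).card ≤ ttau q k := by
  refine le_trans (card_start_le hreg k hk x) ?_
  have h1 : q ^ (k - 1) ≤ ∑ j ∈ Finset.range k, q ^ j :=
    Finset.single_le_sum (f := fun j => q ^ j) (fun _ _ => Nat.zero_le _)
      (Finset.mem_range.mpr (by omega))
  calc (q + 1) * q ^ (k - 1) ≤ (q + 1) * ∑ j ∈ Finset.range k, q ^ j :=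
        by gcongr
    _ ≤ ttau q k := by unfold ttau; omega

end Aux

/-- Proposition 2 (ii) of the paper:
`|‖K̂_G‖²_HSN − ‖K‖²_{H_k}| ≤ τ̃(k)² ‖K‖²_sup (1/|V|) #{x : ρ(x) ≤ k}`. -/
theorem hsn_norm_comparison
    (q : ℕ) (hq : 2 ≤ q)
    (V : Type) [Fintype V] (G : SimpleGraph V)
    (hconn : G.Connected) (hreg : RegularOfDegree G (q + 1))
    (k : ℕ) (hk : 1 ≤ k) (K : (Fin (k + 1) → V) → ℂ) :
    |hsnNormSq G k K - hNormSq G k K|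
      ≤ (ttau q k : ℝ) ^ 2 * supNorm G k K ^ 2 *
        (((Finset.univ.filter fun x : V => ballHasCycle G x (k + 1)).card : ℝ)
          / (Fintype.card V : ℝ)) := by
  classical
  have hV : Nonempty V := hconn.nonempty
  have hn : (0 : ℝ) < (Fintype.card V : ℝ) := by
    exact_mod_cast Fintype.card_pos
  set nb := nbFinset G k with hnb
  set P : Finset ((Fin (k + 1) → V) × (Fin (k + 1) → V)) :=
    (nb ×ˢ nb).filter fun p => p.2 0 = p.1 0 ∧ p.2 (Fin.last k) = p.1 (Fin.last k) with hP
  set g : (Fin (k + 1) → V) × (Fin (k + 1) → V) → ℝ :=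
    fun p => (K p.1 * (starRingEnd ℂ) (K p.2)).re with hg
  have habsre : ∀ z : ℂ, ‖z‖ ^ 2 = (z * (starRingEnd ℂ) z).re := by
    intro z
    rw [Complex.sq_norm, Complex.mul_conj, Complex.ofReal_re]
  -- Claim 1
  have claim1 : ∑ x : V, ∑ y : V, ‖kernelG G k K x y‖ ^ 2 = ∑ p ∈ P, g p := by
    have step1 : ∀ x y : V, ‖kernelG G k K x y‖ ^ 2
        = ∑ p ∈ P.filter (fun p => (p.1 0, p.1 (Fin.last k)) = (x, y)), g p := by
      intro x y
      rw [habsre]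
      unfold kernelG
      rw [map_sum, Finset.sum_mul_sum, ← Finset.sum_product', Complex.re_sum]
      apply Finset.sum_congr
      · ext p
        simp only [Finset.mem_product, Finset.mem_filter, hP, Prod.mk.injEq]
        constructor
        · rintro ⟨⟨h1, h2, h3⟩, h4, h5, h6⟩
          exact ⟨⟨⟨h1, h4⟩, by rw [h5, h2], by rw [h6, h3]⟩, h2, h3⟩
        · rintro ⟨⟨⟨h1, h4⟩, h5, h6⟩, h2, h3⟩
          exact ⟨⟨h1, h2, h3⟩, h4, by rw [h5, h2], by rw [h6, h3]⟩
      · intro p _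
        rfl
    calc ∑ x : V, ∑ y : V, ‖kernelG G k K x y‖ ^ 2
        = ∑ z : V × V, ∑ p ∈ P.filter (fun p => (p.1 0, p.1 (Fin.last k)) = z), g p := by
          rw [Fintype.sum_prod_type]
          exact Finset.sum_congr rfl fun x _ =>
            Finset.sum_congr rfl fun y _ => step1 x y
      _ = ∑ p ∈ P, g p := Finset.sum_fiberwise P _ g
  -- Claim 2
  have claim2 : ∑ ω ∈ nb, ‖K ω‖ ^ 2
      = ∑ p ∈ P.filter (fun p => p.1 = p.2), g p := by
    apply Finset.sum_nbij' (fun ω => (ω, ω)) (fun p => p.1)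
    · intro ω hω
      rw [hP]
      exact Finset.mem_filter.mpr ⟨Finset.mem_filter.mpr
        ⟨Finset.mem_product.mpr ⟨hω, hω⟩, rfl, rfl⟩, rfl⟩
    · intro p hp
      simp only [Finset.mem_filter, hP, Finset.mem_product] at hp
      exact hp.1.1.1
    · intro ω _; rfl
    · intro p hp
      simp only [Finset.mem_filter] at hp
      exact Prod.ext rfl hp.2
    · intro ω _
      rw [habsre]
  -- difference
  set Poff := P.filter (fun p => ¬ p.1 = p.2) with hPoff
  have hdiff : hsnNormSq G k K - hNormSq G k K
      = (1 / (Fintype.card V : ℝ)) * ∑ p ∈ Poff, g p := by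
    unfold hsnNormSq hNormSq
    rw [claim1, claim2, ← mul_sub]
    congr 1
    rw [← Finset.sum_filter_add_sum_filter_not P (fun p => p.1 = p.2) g]
    ring
  -- sup bound
  have hsupnn : 0 ≤ supNorm G k K := NNReal.coe_nonneg _
  have hsup : ∀ ω ∈ nb, ‖K ω‖ ≤ supNorm G k K := by
    intro ω hω
    have h1 : ‖K ω‖ = ((‖K ω‖₊ : NNReal) : ℝ) := by
      rw [coe_nnnorm]
    rw [h1]
    exact_mod_cast Finset.le_sup (f := fun ω => ‖K ω‖₊) hω
  have hgbound : ∀ p ∈ Poff, |g p| ≤ supNorm G k K ^ 2 := by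
    intro p hp
    simp only [hPoff, hP, Finset.mem_filter, Finset.mem_product] at hp
    obtain ⟨⟨⟨h1, h2⟩, _, _⟩, _⟩ := hp
    calc |g p| ≤ ‖K p.1 * (starRingEnd ℂ) (K p.2)‖ := Complex.abs_re_le_norm _
      _ = ‖K p.1‖ * ‖K p.2‖ := by
          rw [norm_mul, Complex.norm_conj]
      _ ≤ supNorm G k K * supNorm G k K :=
          mul_le_mul (hsup _ h1) (hsup _ h2) (norm_nonneg _) hsupnn
      _ = supNorm G k K ^ 2 := (sq _).symm
  -- card bound
  set bad := Finset.univ.filter fun x : V => ballHasCycle G x (k + 1) with hbad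
  have hmapsTo : ∀ p ∈ Poff, p.1 0 ∈ bad := by
    intro p hp
    simp only [hPoff, hP, Finset.mem_filter, Finset.mem_product] at hp
    obtain ⟨⟨⟨h1, h2⟩, h3, h4⟩, h5⟩ := hp
    simp only [hbad, Finset.mem_filter, Finset.mem_univ, true_and]
    simp only [hnb, nbFinset, Finset.mem_filter, Finset.mem_univ, true_and] at h1 h2
    exact bad_of_two hconn h1 h2 h3.symm h4.symm (fun h => h5 h)
  have hfibercard : ∀ x ∈ bad, (Poff.filter fun p => p.1 0 = x).card ≤ ttau q k ^ 2 := by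
    intro x _
    have hsubset : Poff.filter (fun p => p.1 0 = x)
        ⊆ (nb.filter fun ω => ω 0 = x) ×ˢ (nb.filter fun ω => ω 0 = x) := by
      intro p hp
      simp only [Finset.mem_filter, hPoff, hP, Finset.mem_product] at hp ⊢
      obtain ⟨⟨⟨⟨h1, h2⟩, h3, _⟩, _⟩, h6⟩ := hp
      exact ⟨⟨h1, h6⟩, h2, by rw [h3, h6]⟩
    calc (Poff.filter fun p => p.1 0 = x).card
        ≤ ((nb.filter fun ω => ω 0 = x) ×ˢ (nb.filter fun ω => ω 0 = x)).card :=
          Finset.card_le_card hsubset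
      _ = (nb.filter fun ω => ω 0 = x).card * (nb.filter fun ω => ω 0 = x).card :=
          Finset.card_product _ _
      _ ≤ ttau q k * ttau q k :=
          Nat.mul_le_mul (card_start_le_ttau hreg k hk x) (card_start_le_ttau hreg k hk x)
      _ = ttau q k ^ 2 := (sq _).symm
  have hcardPoff : Poff.card ≤ bad.card * ttau q k ^ 2 := by
    rw [Finset.card_eq_sum_card_fiberwise hmapsTo]
    calc ∑ x ∈ bad, (Poff.filter fun p => p.1 0 = x).card
        ≤ ∑ x ∈ bad, ttau q k ^ 2 := Finset.sum_le_sum hfibercard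
      _ = bad.card * ttau q k ^ 2 := by rw [Finset.sum_const, smul_eq_mul]
  -- final assembly
  rw [hdiff, abs_mul]
  have h1n : |1 / (Fintype.card V : ℝ)| = 1 / (Fintype.card V : ℝ) :=
    abs_of_pos (by positivity)
  rw [h1n]
  have hsum : |∑ p ∈ Poff, g p| ≤ (bad.card : ℝ) * ttau q k ^ 2 * supNorm G k K ^ 2 := by
    calc |∑ p ∈ Poff, g p| ≤ ∑ p ∈ Poff, |g p| := Finset.abs_sum_le_sum_abs _ _
      _ ≤ Poff.card • (supNorm G k K ^ 2) := Finset.sum_le_card_nsmul _ _ _ hgbound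
      _ = (Poff.card : ℝ) * supNorm G k K ^ 2 := nsmul_eq_mul _ _
      _ ≤ ((bad.card * ttau q k ^ 2 : ℕ) : ℝ) * supNorm G k K ^ 2 := by
          apply mul_le_mul_of_nonneg_right _ (by positivity)
          exact_mod_cast hcardPoff
      _ = (bad.card : ℝ) * ttau q k ^ 2 * supNorm G k K ^ 2 := by push_cast; ring
  calc (1 / (Fintype.card V : ℝ)) * |∑ p ∈ Poff, g p|
      ≤ (1 / (Fintype.card V : ℝ)) * ((bad.card : ℝ) * ttau q k ^ 2 * supNorm G k K ^ 2) :=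
        mul_le_mul_of_nonneg_left hsum (by positivity)
    _ = (ttau q k : ℝ) ^ 2 * supNorm G k K ^ 2 * ((bad.card : ℝ) / (Fintype.card V : ℝ)) := by
        ring

end
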